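/- Let α₁,…,α₆ be the E₆ simple roots in ℝ⁸ as above, V = span(α₁,…,α₆), and for each i let ζᵢ be the unique vector in V with ⟨ζᵢ, αⱼ⟩ = δᵢⱼ. Then the vector Λ = ζ₃ + ζ₅ + ζ₆ satisfies ‖Λ‖² = 58/3. In particular ‖Λ‖² < 30 = ‖ρ_c‖² where ρ_c = (0,1,2,3,4,0,0,0). -/

import Mathlib

open Matrix

noncomputable section

/-- The simple roots of E₆ in Bourbaki order, in ℝ⁸. -/
def e6α : Fin 6 → (Fin 8 → ℝ)
  | 0 => ![1/2, -1/2, -1/2, -1/2, -1/2, -1/2, -1/2, 1/2]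
  | 1 => ![1, 1, 0, 0, 0, 0, 0, 0]
  | 2 => ![-1, 1, 0, 0, 0, 0, 0, 0]
  | 3 => ![0, -1, 1, 0, 0, 0, 0, 0]
  | 4 => ![0, 0, -1, 1, 0, 0, 0, 0]
  | 5 => ![0, 0, 0, -1, 1, 0, 0, 0]

/-- The explicit value of Λ = ζ₃ + ζ₅ + ζ₆. -/
def e6L : Fin 8 → ℝ := ![-1/2, 1/2, 1/2, 3/2, 5/2, -11/6, -11/6, 11/6]

lemma vec8_5 (a b c d e f g h : ℝ) : ![a,b,c,d,e,f,g,h] 5 = f := rfl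
lemma vec8_6 (a b c d e f g h : ℝ) : ![a,b,c,d,e,f,g,h] 6 = g := rfl
lemma vec8_7 (a b c d e f g h : ℝ) : ![a,b,c,d,e,f,g,h] 7 = h := rfl
lemma vec6_5 (a b c d e f : ℝ) : ![a,b,c,d,e,f] 5 = f := rfl

lemma e6L_mem : e6L ∈ Submodule.span ℝ (Set.range e6α) := by
  rw [Submodule.mem_span_range_iff_exists_fun]
  refine ⟨![11/3, 5, 22/3, 10, 23/3, 13/3], ?_⟩
  funext k
  rw [Fin.sum_univ_six]
  fin_cases k <;>
    simp [e6α, e6L, vec6_5, vec8_5, vec8_6, vec8_7] <;> norm_num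

lemma e6L_dot (j : Fin 6) : e6L ⬝ᵥ e6α j = if j = 2 ∨ j = 4 ∨ j = 5 then 1 else 0 := by
  fin_cases j <;> simp [e6α, e6L, dotProduct, Fin.sum_univ_succ] <;> norm_num

lemma sum_dot (c : Fin 6 → ℝ) (v : Fin 6 → Fin 8 → ℝ) (w : Fin 8 → ℝ) :
    (∑ i, c i • v i) ⬝ᵥ w = ∑ i, c i * (v i ⬝ᵥ w) := by
  simp [dotProduct, Finset.sum_mul, Finset.mul_sum, mul_assoc]
  rw [Finset.sum_comm]

/-- If ζ₁,…,ζ₆ are the fundamental weights of E₆ (dual basis in the span of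
the simple roots), then Λ = ζ₃ + ζ₅ + ζ₆ has ‖Λ‖² = 58/3 < 30 = ‖ρ_c‖². -/
theorem norm_sq_of_001011 (ζ : Fin 6 → (Fin 8 → ℝ))
    (hmem : ∀ i, ζ i ∈ Submodule.span ℝ (Set.range e6α))
    (hdual : ∀ i j, ζ i ⬝ᵥ e6α j = if i = j then 1 else 0) :
    (ζ 2 + ζ 4 + ζ 5) ⬝ᵥ (ζ 2 + ζ 4 + ζ 5) = 58/3 ∧
    (ζ 2 + ζ 4 + ζ 5) ⬝ᵥ (ζ 2 + ζ 4 + ζ 5) <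
      (![0, 1, 2, 3, 4, 0, 0, 0] : Fin 8 → ℝ) ⬝ᵥ ![0, 1, 2, 3, 4, 0, 0, 0] ∧
    (![0, 1, 2, 3, 4, 0, 0, 0] : Fin 8 → ℝ) ⬝ᵥ ![0, 1, 2, 3, 4, 0, 0, 0] = 30 := by
  set Λ := ζ 2 + ζ 4 + ζ 5 with hΛ
  have hΛmem : Λ ∈ Submodule.span ℝ (Set.range e6α) :=
    Submodule.add_mem _ (Submodule.add_mem _ (hmem 2) (hmem 4)) (hmem 5)
  have hΛdot : ∀ j, Λ ⬝ᵥ e6α j = e6L ⬝ᵥ e6α j := by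
    intro j
    rw [hΛ, add_dotProduct, add_dotProduct, hdual, hdual, hdual, e6L_dot]
    fin_cases j <;> simp
  have hd : Λ = e6L := by
    have hdm : Λ - e6L ∈ Submodule.span ℝ (Set.range e6α) :=
      Submodule.sub_mem _ hΛmem e6L_mem
    rw [Submodule.mem_span_range_iff_exists_fun] at hdm
    obtain ⟨c, hc⟩ := hdm
    have hdz : ∀ j, (Λ - e6L) ⬝ᵥ e6α j = 0 := by
      intro j; rw [sub_dotProduct, hΛdot, sub_self]
    have hself : (Λ - e6L) ⬝ᵥ (Λ - e6L) = 0 := by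
      conv_lhs => rw [← hc]
      rw [sum_dot]
      exact Finset.sum_eq_zero fun j _ => by
        rw [hc, dotProduct_comm, hdz, mul_zero]
    exact sub_eq_zero.mp ((dotProduct_self_eq_zero (v := Λ - e6L)).mp hself)
  rw [hd]
  refine ⟨?_, ?_, ?_⟩ <;>
    simp [e6L, dotProduct, Fin.sum_univ_succ] <;> norm_num
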